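/- Let P be a bounded closed subset of ℝⁿ with the origin in its interior, v ∈ ℝⁿ with ∫_P (x·v) dλ > 0, and H a closed half-space with outward normal v such that ∫_{P∩H} (x·v) dλ = 0. If Q ⊆ P is closed with ∫_Q (x·v) dλ = 0 and vol(Q) = vol(P∩H), then Q and P∩H agree up to a Lebesgue-null set. -/

import Mathlib

open MeasureTheory Set

/-- Uniqueness in the half-space maximization: any closed `Q ⊆ P` satisfying the
constraint `∫_Q ⟪x,v⟫ dλ = 0` and having the same volume as the half-space truncation
`P ∩ {x | ⟪x,v⟫ ≤ c}` agrees with it up to a Lebesgue-null set. -/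
theorem halfspace_maximizer_unique (n : ℕ) (P : Set (EuclideanSpace ℝ (Fin n)))
    (hPclosed : IsClosed P) (hPmeas : MeasurableSet P) (hPbdd : Bornology.IsBounded P)
    (h0 : (0 : EuclideanSpace ℝ (Fin n)) ∈ interior P)
    (v : EuclideanSpace ℝ (Fin n))
    (hpos : 0 < ∫ x in P, (inner ℝ x v : ℝ) ∂(volume : Measure (EuclideanSpace ℝ (Fin n))))
    (c : ℝ)
    (hHzero : ∫ x in P ∩ {x | inner ℝ x v ≤ c}, (inner ℝ x v : ℝ) ∂volume = 0)
    (Q : Set (EuclideanSpace ℝ (Fin n))) (hQclosed : IsClosed Q) (hQP : Q ⊆ P)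
    (hQzero : ∫ x in Q, (inner ℝ x v : ℝ) ∂volume = 0)
    (hQvol : volume Q = volume (P ∩ {x | inner ℝ x v ≤ c})) :
    volume (symmDiff Q (P ∩ {x | inner ℝ x v ≤ c})) = 0 := by
  set f : EuclideanSpace ℝ (Fin n) → ℝ := fun x => inner ℝ x v with hfdef
  have hfc : Continuous f := continuous_id.inner continuous_const
  set H : Set (EuclideanSpace ℝ (Fin n)) := {x | inner ℝ x v ≤ c} with hHdef
  set A : Set (EuclideanSpace ℝ (Fin n)) := P ∩ H with hAdef
  have hHclosed : IsClosed H := isClosed_le hfc continuous_const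
  have hHmeas : MeasurableSet H := hHclosed.measurableSet
  have hAmeas : MeasurableSet A := hPmeas.inter hHmeas
  have hQmeas : MeasurableSet Q := hQclosed.measurableSet
  have hPcomp : IsCompact P := Metric.isCompact_of_isClosed_isBounded hPclosed hPbdd
  have hQcomp : IsCompact Q := hPcomp.of_isClosed_subset hQclosed hQP
  have hAcomp : IsCompact A :=
    hPcomp.of_isClosed_subset (hPclosed.inter hHclosed) inter_subset_left
  have hIntQ : IntegrableOn f Q := hfc.continuousOn.integrableOn_compact hQcomp
  have hIntA : IntegrableOn f A := hfc.continuousOn.integrableOn_compact hAcomp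
  have hAfin : volume A ≠ ⊤ := hAcomp.measure_lt_top.ne
  have hQfin : volume Q ≠ ⊤ := hQcomp.measure_lt_top.ne
  have hQAfin : volume (Q ∩ A) ≠ ⊤ :=
    (lt_of_le_of_lt (measure_mono inter_subset_left) hQcomp.measure_lt_top).ne
  -- split integrals
  have hsplitQ : (∫ x in Q ∩ A, f x) + ∫ x in Q \ A, f x = ∫ x in Q, f x :=
    integral_inter_add_diff hAmeas hIntQ
  have hsplitA : (∫ x in A ∩ Q, f x) + ∫ x in A \ Q, f x = ∫ x in A, f x :=
    integral_inter_add_diff hQmeas hIntA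
  have hintercomm : Q ∩ A = A ∩ Q := inter_comm Q A
  have hinteq : (∫ x in Q \ A, f x) = ∫ x in A \ Q, f x := by
    have h1 : (∫ x in Q ∩ A, f x) + ∫ x in Q \ A, f x = 0 := by rw [hsplitQ]; exact hQzero
    have h2 : (∫ x in Q ∩ A, f x) + ∫ x in A \ Q, f x = 0 := by
      rw [hintercomm, hsplitA]; exact hHzero
    linarith
  -- equal volumes of differences
  have hvolQ : volume (Q ∩ A) + volume (Q \ A) = volume Q := measure_inter_add_diff Q hAmeas
  have hvolA : volume (A ∩ Q) + volume (A \ Q) = volume A := measure_inter_add_diff A hQmeas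
  have hvoldiff : volume (Q \ A) = volume (A \ Q) := by
    have : volume (Q ∩ A) + volume (Q \ A) = volume (Q ∩ A) + volume (A \ Q) := by
      rw [hvolQ, hQvol, ← hvolA, hintercomm]
    exact (ENNReal.add_right_inj hQAfin).mp this
  -- integrability on differences
  have hIntQA : IntegrableOn f (Q \ A) := hIntQ.mono_set diff_subset
  have hIntAQ : IntegrableOn f (A \ Q) := hIntA.mono_set diff_subset
  -- f ≤ c on A \ Q, f > c on Q \ A
  have hAQfinlt : volume (A \ Q) < ⊤ := lt_of_le_of_lt (measure_mono diff_subset) hAcomp.measure_lt_top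
  have hQAfinlt : volume (Q \ A) < ⊤ := lt_of_le_of_lt (measure_mono diff_subset) hQcomp.measure_lt_top
  have hconstAQ : IntegrableOn (fun _ => c) (A \ Q) volume :=
    integrableOn_const hAQfinlt.ne
  have hconstQA : IntegrableOn (fun _ => c) (Q \ A) volume :=
    integrableOn_const hQAfinlt.ne
  have hub : (∫ x in A \ Q, f x) ≤ c * (volume (A \ Q)).toReal := by
    have := setIntegral_mono_on hIntAQ hconstAQ
      (hAmeas.diff hQmeas) (fun x hx => ?_)
    · rw [setIntegral_const, smul_eq_mul, mul_comm] at this; exact this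
    · exact hx.1.2
  have hlb : c * (volume (Q \ A)).toReal ≤ ∫ x in Q \ A, f x := by
    have := setIntegral_mono_on hconstQA hIntQA
      (hQmeas.diff hAmeas) (fun x hx => ?_)
    · rw [setIntegral_const, smul_eq_mul, mul_comm] at this; exact this
    · have hxH : x ∉ H := fun hxh => hx.2 ⟨hQP hx.1, hxh⟩
      exact le_of_lt (not_le.mp hxH)
  -- so ∫_{Q\A} (f - c) ≤ 0
  have hg : (∫ x in Q \ A, (f x - c)) ≤ 0 := by
    rw [integral_sub hIntQA hconstQA,
      setIntegral_const, smul_eq_mul, mul_comm]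
    have : (∫ x in Q \ A, f x) ≤ c * (volume (Q \ A)).toReal := by
      rw [← hinteq, ← hvoldiff] at hub; exact hub
    rw [measureReal_def]
    linarith
  -- positivity argument forces volume (Q \ A) = 0
  have hQA0 : volume (Q \ A) = 0 := by
    by_contra h
    have hpos' : 0 < ∫ x in Q \ A, (f x - c) := by
      rw [setIntegral_pos_iff_support_of_nonneg_ae ?_ ?_]
      · have hsub : Q \ A ⊆ Function.support (fun x => f x - c) := by
          intro x hx
          have hxH : x ∉ H := fun hxh => hx.2 ⟨hQP hx.1, hxh⟩
          have : c < f x := not_le.mp hxH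
          simp [Function.mem_support]; linarith
        rw [inter_eq_self_of_subset_right hsub]
        exact pos_iff_ne_zero.mpr h
      · refine ae_restrict_of_forall_mem (hQmeas.diff hAmeas) (fun x hx => ?_)
        have hxH : x ∉ H := fun hxh => hx.2 ⟨hQP hx.1, hxh⟩
        have : c < f x := not_le.mp hxH
        simp; linarith
      · exact hIntQA.sub hconstQA
    linarith
  have hAQ0 : volume (A \ Q) = 0 := hvoldiff ▸ hQA0
  calc volume (symmDiff Q A) = volume ((Q \ A) ∪ (A \ Q)) := by rw [Set.symmDiff_def]
    _ = 0 := measure_union_null hQA0 hAQ0
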